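/- For α > 2 and fixed s₁ > 0, define f(s₁,s₂) = (∫₀^∞ e^{−(s₁+s₂)x^{2/α}}/(1+x) dx) / (s₁·∫₀^∞ x^{2/α} e^{−(s₁+s₂)x^{2/α}}/(1+x) dx). Then f(s₁,s₂) is monotonically increasing in s₂. -/

import Mathlib

open Real MeasureTheory Set
open scoped ENNReal

-- integrability of x^s * exp(-(b*x^p)) on (0,∞) for p>0
lemma aux_int {p s b : ℝ} (hs : -1 < s) (hp : 0 < p) (hb : 0 < b) :
    IntegrableOn (fun x : ℝ => x ^ s * Real.exp (-(b * x ^ p))) (Set.Ioi 0) := by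
  set q : ℝ := (s + 1) / p - 1 with hq
  have hq1 : -1 < q := by
    have : 0 < (s + 1) / p := div_pos (by linarith) hp
    simp only [hq]; linarith
  have hbase : IntegrableOn (fun y : ℝ => y ^ q * Real.exp (-y)) (Set.Ioi 0) := by
    have h := Real.GammaIntegral_convergent (s := q + 1) (by linarith)
    refine h.congr_fun (fun x hx => ?_) measurableSet_Ioi
    simp [mul_comm]
  have hscaled : IntegrableOn (fun y : ℝ => y ^ q * Real.exp (-(b * y))) (Set.Ioi 0) := by
    have h2 : IntegrableOn (fun y : ℝ => (b * y) ^ q * Real.exp (-(b * y))) (Set.Ioi 0) := by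
      have h3 := (integrableOn_Ioi_comp_mul_left_iff
        (fun y : ℝ => y ^ q * Real.exp (-y)) 0 hb).mpr (by simpa using hbase)
      simpa using h3
    have h4 : IntegrableOn (fun x : ℝ => b ^ (-q) * ((b * x) ^ q * Real.exp (-(b * x)))) (Set.Ioi 0) := h2.const_mul (b ^ (-q))
    refine h4.congr_fun (fun x hx => ?_) measurableSet_Ioi
    have hx0 : (0:ℝ) < x := hx
    beta_reduce
    rw [Real.mul_rpow hb.le hx0.le, ← mul_assoc, ← mul_assoc,
      ← Real.rpow_add hb, neg_add_cancel, Real.rpow_zero, one_mul]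
  have key := (integrableOn_Ioi_comp_rpow_iff'
    (fun y : ℝ => y ^ q * Real.exp (-(b * y))) hp.ne').mpr hscaled
  refine key.congr_fun (fun x hx => ?_) measurableSet_Ioi
  have hx0 : (0:ℝ) < x := hx
  have h5 : ((x : ℝ) ^ p) ^ q = x ^ (p * q) := (Real.rpow_mul hx0.le p q).symm
  have h6 : p * q = s + 1 - p := by
    rw [hq, mul_sub, mul_one, mul_div_assoc', mul_div_cancel_left₀ _ hp.ne']
  simp only [smul_eq_mul, h5, h6]
  rw [← mul_assoc, ← Real.rpow_add hx0]
  ring_nf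

lemma intN {c t : ℝ} (hc : 0 < c) (ht : 0 < t) :
    IntegrableOn (fun x : ℝ => Real.exp (-(t * x ^ c)) / (1 + x)) (Set.Ioi 0) := by
  have hg : IntegrableOn (fun x : ℝ => Real.exp (-(t * x ^ c))) (Set.Ioi 0) := by
    refine (aux_int (s := 0) (by norm_num) hc ht).congr_fun (fun x hx => ?_) measurableSet_Ioi
    beta_reduce
    rw [Real.rpow_zero, one_mul]
  refine Integrable.mono' hg ((by fun_prop : Measurable fun x : ℝ => Real.exp (-(t * x ^ c)) / (1 + x)).aestronglyMeasurable) ?_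
  · rw [ae_restrict_iff' measurableSet_Ioi]
    filter_upwards with x hx
    have hx0 : (0:ℝ) < x := hx
    rw [Real.norm_eq_abs, abs_div, abs_of_pos (Real.exp_pos _), abs_of_pos (by linarith)]
    calc Real.exp (-(t * x ^ c)) / (1 + x) ≤ Real.exp (-(t * x ^ c)) / 1 := by
          apply div_le_div_of_nonneg_left (Real.exp_pos _).le one_pos (by linarith)
      _ = Real.exp (-(t * x ^ c)) := by rw [div_one]

lemma intD {c t : ℝ} (hc : 0 < c) (ht : 0 < t) :
    IntegrableOn (fun x : ℝ => x ^ c * Real.exp (-(t * x ^ c)) / (1 + x)) (Set.Ioi 0) := by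
  refine Integrable.mono' (aux_int (s := c) (by linarith) hc ht) ((by fun_prop : Measurable fun x : ℝ => x ^ c * Real.exp (-(t * x ^ c)) / (1 + x)).aestronglyMeasurable) ?_
  rw [ae_restrict_iff' measurableSet_Ioi]
  filter_upwards with x hx
  have hx0 : (0:ℝ) < x := hx
  have hxc : 0 < x ^ c := Real.rpow_pos_of_pos hx0 c
  rw [Real.norm_eq_abs, abs_div, abs_of_pos (by positivity), abs_of_pos (by linarith)]
  calc x ^ c * Real.exp (-(t * x ^ c)) / (1 + x)
      ≤ x ^ c * Real.exp (-(t * x ^ c)) / 1 := by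
        apply div_le_div_of_nonneg_left (by positivity) one_pos (by linarith)
    _ = x ^ c * Real.exp (-(t * x ^ c)) := by rw [div_one]

lemma Dpos {c t : ℝ} (hc : 0 < c) (ht : 0 < t) :
    0 < ∫ x in Set.Ioi (0:ℝ), x ^ c * Real.exp (-(t * x ^ c)) / (1 + x) := by
  rw [setIntegral_pos_iff_support_of_nonneg_ae _ (intD hc ht)]
  · have hsub : Set.Ioi (0:ℝ) ⊆ (Function.support fun x : ℝ => x ^ c * Real.exp (-(t * x ^ c)) / (1 + x)) ∩ Set.Ioi 0 := by
      intro x hx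
      have hx0 : (0:ℝ) < x := hx
      refine ⟨?_, hx⟩
      simp only [Function.mem_support]
      positivity
    refine lt_of_lt_of_le ?_ (measure_mono hsub)
    rw [Real.volume_Ioi]; exact ENNReal.zero_lt_top
  · filter_upwards [ae_restrict_mem measurableSet_Ioi] with x hx
    have hx0 : (0:ℝ) < x := hx
    positivity

lemma Npos {c t : ℝ} (hc : 0 < c) (ht : 0 < t) :
    0 < ∫ x in Set.Ioi (0:ℝ), Real.exp (-(t * x ^ c)) / (1 + x) := by
  rw [setIntegral_pos_iff_support_of_nonneg_ae _ (intN hc ht)]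
  · have hsub : Set.Ioi (0:ℝ) ⊆ (Function.support fun x : ℝ => Real.exp (-(t * x ^ c)) / (1 + x)) ∩ Set.Ioi 0 := by
      intro x hx
      have hx0 : (0:ℝ) < x := hx
      refine ⟨?_, hx⟩
      simp only [Function.mem_support]
      positivity
    refine lt_of_lt_of_le ?_ (measure_mono hsub)
    rw [Real.volume_Ioi]; exact ENNReal.zero_lt_top
  · filter_upwards [ae_restrict_mem measurableSet_Ioi] with x hx
    have hx0 : (0:ℝ) < x := hx
    positivity

lemma core {c t Δ : ℝ} (hc : 0 < c) (ht : 0 < t) (hΔ : 0 ≤ Δ) :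
    (∫ x in Set.Ioi (0:ℝ), Real.exp (-(t * x ^ c)) / (1 + x)) *
      (∫ x in Set.Ioi (0:ℝ), x ^ c * Real.exp (-((t + Δ) * x ^ c)) / (1 + x)) ≤
    (∫ x in Set.Ioi (0:ℝ), Real.exp (-((t + Δ) * x ^ c)) / (1 + x)) *
      (∫ x in Set.Ioi (0:ℝ), x ^ c * Real.exp (-(t * x ^ c)) / (1 + x)) := by
  have ht' : 0 < t + Δ := by linarith
  set F : ℝ → ℝ := fun x => Real.exp (-(t * x ^ c)) / (1 + x) with hF
  set FE : ℝ → ℝ := fun x => Real.exp (-((t + Δ) * x ^ c)) / (1 + x) with hFE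
  set FH : ℝ → ℝ := fun x => x ^ c * Real.exp (-(t * x ^ c)) / (1 + x) with hFH
  set FHE : ℝ → ℝ := fun x => x ^ c * Real.exp (-((t + Δ) * x ^ c)) / (1 + x) with hFHE
  have hiF : Integrable F (volume.restrict (Set.Ioi 0)) := intN hc ht
  have hiFE : Integrable FE (volume.restrict (Set.Ioi 0)) := intN hc ht'
  have hiFH : Integrable FH (volume.restrict (Set.Ioi 0)) := intD hc ht
  have hiFHE : Integrable FHE (volume.restrict (Set.Ioi 0)) := intD hc ht'
  set μ := volume.restrict (Set.Ioi (0:ℝ)) with hμ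
  set G : ℝ × ℝ → ℝ := fun z =>
    FHE z.1 * F z.2 + F z.1 * FHE z.2 - FH z.1 * FE z.2 - FE z.1 * FH z.2 with hG
  have hint1 := hiFHE.mul_prod hiF
  have hint2 := hiF.mul_prod hiFHE
  have hint3 := hiFH.mul_prod hiFE
  have hint4 := hiFE.mul_prod hiFH
  have hGle : ∫ z, G z ∂(μ.prod μ) ≤ 0 := by
    refine integral_nonpos_of_ae ?_
    rw [hμ, Measure.prod_restrict]
    filter_upwards [ae_restrict_mem (measurableSet_Ioi.prod measurableSet_Ioi)] with z hz
    obtain ⟨hx, hy⟩ := hz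
    have hx0 : (0:ℝ) < z.1 := hx
    have hy0 : (0:ℝ) < z.2 := hy
    set x := z.1
    set y := z.2
    have hfact : G z = (F x * F y) *
        ((x ^ c - y ^ c) * (Real.exp (-(Δ * x ^ c)) - Real.exp (-(Δ * y ^ c)))) := by
      simp only [hG, hF, hFE, hFH, hFHE]
      have e1 : Real.exp (-((t + Δ) * x ^ c)) = Real.exp (-(t * x ^ c)) * Real.exp (-(Δ * x ^ c)) := by
        rw [← Real.exp_add]; ring_nf
      have e2 : Real.exp (-((t + Δ) * y ^ c)) = Real.exp (-(t * y ^ c)) * Real.exp (-(Δ * y ^ c)) := by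
        rw [← Real.exp_add]; ring_nf
      rw [e1, e2]
      simp only [x, y]
      field_simp
      ring
    rw [hfact]
    have hFx : 0 ≤ F x := by simp only [hF]; positivity
    have hFy : 0 ≤ F y := by simp only [hF]; positivity
    have hkey : (x ^ c - y ^ c) * (Real.exp (-(Δ * x ^ c)) - Real.exp (-(Δ * y ^ c))) ≤ 0 := by
      rcases le_total (x ^ c) (y ^ c) with h | h
      · apply mul_nonpos_of_nonpos_of_nonneg (by linarith)
        have : -(Δ * y ^ c) ≤ -(Δ * x ^ c) := by nlinarith
        have := Real.exp_le_exp.mpr this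
        linarith
      · apply mul_nonpos_of_nonneg_of_nonpos (by linarith)
        have : -(Δ * x ^ c) ≤ -(Δ * y ^ c) := by nlinarith
        have := Real.exp_le_exp.mpr this
        linarith
    exact mul_nonpos_of_nonneg_of_nonpos (mul_nonneg hFx hFy) hkey
  have hexp : ∫ z, G z ∂(μ.prod μ) =
      (∫ x, FHE x ∂μ) * (∫ x, F x ∂μ) + (∫ x, F x ∂μ) * (∫ x, FHE x ∂μ)
        - (∫ x, FH x ∂μ) * (∫ x, FE x ∂μ) - (∫ x, FE x ∂μ) * (∫ x, FH x ∂μ) := by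
    have : ∫ z, G z ∂(μ.prod μ) =
        (∫ z, FHE z.1 * F z.2 ∂(μ.prod μ)) + (∫ z, F z.1 * FHE z.2 ∂(μ.prod μ))
          - (∫ z, FH z.1 * FE z.2 ∂(μ.prod μ)) - (∫ z, FE z.1 * FH z.2 ∂(μ.prod μ)) := by
      simp only [hG]
      rw [integral_sub _ hint4, integral_sub _ hint3, integral_add hint1 hint2]
      · exact hint1.add hint2
      · exact (hint1.add hint2).sub hint3
    rw [this, integral_prod_mul, integral_prod_mul, integral_prod_mul, integral_prod_mul]
  rw [hexp] at hGle
  linarith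


theorem f_monotone_in_s2 (α s₁ : ℝ) (hα : 2 < α) (hs₁ : 0 < s₁) :
    MonotoneOn (fun s₂ : ℝ =>
      (∫ x in Set.Ioi (0 : ℝ), Real.exp (-((s₁ + s₂) * x ^ (2 / α))) / (1 + x)) /
      (s₁ * ∫ x in Set.Ioi (0 : ℝ),
        x ^ (2 / α) * Real.exp (-((s₁ + s₂) * x ^ (2 / α))) / (1 + x)))
      (Set.Ioi 0) := by
  intro a ha b hb hab
  have ha0 : (0:ℝ) < a := ha
  have hb0 : (0:ℝ) < b := hb
  have hc : 0 < 2 / α := div_pos two_pos (by linarith)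
  have hta : 0 < s₁ + a := by linarith
  have htb : 0 < s₁ + b := by linarith
  have htb_eq : s₁ + b = (s₁ + a) + (b - a) := by ring
  have hcore := core hc hta (show (0:ℝ) ≤ b - a by linarith)
  rw [← htb_eq] at hcore
  have hDa := Dpos hc hta
  have hDb := Dpos hc htb
  have hNa := Npos hc hta
  simp only
  rw [div_le_div_iff₀ (mul_pos hs₁ hDa) (mul_pos hs₁ hDb)]
  nlinarith [mul_le_mul_of_nonneg_right hcore hs₁.le]
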